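/- arXiv:1403.4875 — 2 statements merged into one kernel-verified Lean document; each statement's English description precedes it below -/
import Mathlib

section
/- Let K be a field, L a Lie algebra over K, B : L × L → K an invariant bilinear form (B(⁅x,y⁆,z) = B(x,⁅y,z⁆) for all x,y,z), and (𝒢 i)_{i∈ℤ} submodules of L with ⁅𝒢 i, 𝒢 j⁆ ⊆ 𝒢(i+j) for all i,j and with B(x, y) = 0 whenever x ∈ 𝒢 i, y ∈ 𝒢 j and i + j ≠ 0. Let Y ∈ 𝒢(−2), set 𝔫 := ⨆_{i ≥ 1} 𝒢 i, 𝔫² := ⨆_{i ≥ 2} 𝒢 i, and 𝔫' := (𝒢 1 ⊓ {x : ⁅x,Y⁆ = 0}) ⊔ 𝔫². Then for all n ∈ 𝔫 and x ∈ 𝔫' one has B(Y, ⁅n, x⁆) = 0. Consequently, the linear functional X ↦ B(Y, X) vanishes on ⁅𝔫', 𝔫'⁆, and the submodule 𝔫'' := {x ∈ 𝔫' : B(Y, x) = 0} satisfies ⁅𝔫, 𝔫''⁆ ⊆ 𝔫'', i.e. 𝔫'' is a Lie ideal of 𝔫. -/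
/-- The centralizer `Y^# = {X ∈ L : ⁅X, Y⁆ = 0}` of an element `Y` of a Lie algebra `L`,
as a `K`-submodule of `L`. -/
def lieCentralizer (K : Type*) {L : Type*} [Field K] [LieRing L] [LieAlgebra K L]
    (Y : L) : Submodule K L where
  carrier := {X : L | ⁅X, Y⁆ = 0}
  add_mem' := by
    intro a b ha hb
    simp only [Set.mem_setOf_eq] at *
    rw [add_lie, ha, hb, add_zero]
  zero_mem' := zero_lie Y
  smul_mem' := by
    intro c x hx
    simp only [Set.mem_setOf_eq] at *
    rw [smul_lie, hx, smul_zero]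

/-- Let `B` be an invariant bilinear form on a Lie algebra `L`, and
`𝒢 i` (`i ∈ ℤ`) submodules with `⁅𝒢 i, 𝒢 j⁆ ⊆ 𝒢 (i+j)` and `B(𝒢 i, 𝒢 j) = 0` whenever
`i + j ≠ 0`.  Let `Y ∈ 𝒢 (−2)`, and set `𝔫 := ⨆_{i ≥ 1} 𝒢 i`, `𝔫² := ⨆_{i ≥ 2} 𝒢 i`,
`𝔫' := (𝒢 1 ⊓ Y^#) ⊔ 𝔫²`.  Then `B(Y, ⁅𝔫, 𝔫'⁆) = 0`; consequently `X ↦ B Y X` vanishes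
on `⁅𝔫', 𝔫'⁆`, and `𝔫'' := {x ∈ 𝔫' : B Y x = 0}` satisfies `⁅𝔫, 𝔫''⁆ ⊆ 𝔫''`, i.e. `𝔫''`
is a Lie ideal of `𝔫`. -/
theorem character_data_on_nilpotent_part
    {K L : Type*} [Field K] [LieRing L] [LieAlgebra K L]
    (B : L →ₗ[K] L →ₗ[K] K)
    (hinv : ∀ x y z : L, B ⁅x, y⁆ z = B x ⁅y, z⁆)
    (𝒢 : ℤ → Submodule K L)
    (hG : ∀ i j : ℤ, ∀ x ∈ 𝒢 i, ∀ y ∈ 𝒢 j, ⁅x, y⁆ ∈ 𝒢 (i + j))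
    (horth : ∀ i j : ℤ, i + j ≠ 0 → ∀ x ∈ 𝒢 i, ∀ y ∈ 𝒢 j, B x y = 0)
    (Y : L) (hY : Y ∈ 𝒢 (-2)) :
    (∀ n ∈ (⨆ (i : ℤ) (_ : 1 ≤ i), 𝒢 i),
        ∀ x ∈ (𝒢 1 ⊓ lieCentralizer K Y) ⊔ (⨆ (i : ℤ) (_ : 2 ≤ i), 𝒢 i),
        B Y ⁅n, x⁆ = 0) ∧
    (∀ x ∈ (𝒢 1 ⊓ lieCentralizer K Y) ⊔ (⨆ (i : ℤ) (_ : 2 ≤ i), 𝒢 i),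
        ∀ y ∈ (𝒢 1 ⊓ lieCentralizer K Y) ⊔ (⨆ (i : ℤ) (_ : 2 ≤ i), 𝒢 i),
        B Y ⁅x, y⁆ = 0) ∧
    (∀ n ∈ (⨆ (i : ℤ) (_ : 1 ≤ i), 𝒢 i),
        ∀ x ∈ (𝒢 1 ⊓ lieCentralizer K Y) ⊔ (⨆ (i : ℤ) (_ : 2 ≤ i), 𝒢 i),
        B Y x = 0 →
          ⁅n, x⁆ ∈ (𝒢 1 ⊓ lieCentralizer K Y) ⊔ (⨆ (i : ℤ) (_ : 2 ≤ i), 𝒢 i) ∧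
          B Y ⁅n, x⁆ = 0) := by
  set N : Submodule K L := ⨆ (i : ℤ) (_ : 1 ≤ i), 𝒢 i with hNdef
  set N2 : Submodule K L := ⨆ (i : ℤ) (_ : 2 ≤ i), 𝒢 i with hN2def
  -- B Y ⁅n, a⁆ = 0 whenever a centralizes Y
  have hcent : ∀ n : L, ∀ a ∈ lieCentralizer K Y, B Y ⁅n, a⁆ = 0 := by
    intro n a ha
    have haY : ⁅a, Y⁆ = 0 := ha
    have hYa : ⁅Y, a⁆ = 0 := by rw [← lie_skew, haY, neg_zero]
    have h0 : B Y ⁅a, n⁆ = 0 := by rw [← hinv, hYa, map_zero, LinearMap.zero_apply]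
    rw [← lie_skew n a, map_neg, h0, neg_zero]
  -- for n ∈ 𝒢 i with 1 ≤ i, B Y ⁅n, ·⁆ vanishes on N2
  have hG2 : ∀ i : ℤ, 1 ≤ i → ∀ n ∈ 𝒢 i, ∀ x ∈ N2, B Y ⁅n, x⁆ = 0 := by
    intro i hi n hn x hx
    have hker : N2 ≤ LinearMap.ker ((B Y).comp ((LieAlgebra.ad K L n : L →ₗ[K] L))) := by
      refine iSup_le fun j => iSup_le fun hj z hz => ?_
      simp only [LinearMap.mem_ker, LinearMap.comp_apply, LieAlgebra.ad_apply]
      exact horth (-2) (i + j) (by omega) Y hY _ (hG i j n hn z hz)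
    have := hker hx
    simpa only [LinearMap.mem_ker, LinearMap.comp_apply, LieAlgebra.ad_apply] using this
  -- B Y ⁅n, x⁆ = 0 for n ∈ N, x ∈ N2
  have h1 : ∀ n ∈ N, ∀ x ∈ N2, B Y ⁅n, x⁆ = 0 := by
    have hle : N ≤
        { carrier := {n : L | ∀ x ∈ N2, B Y ⁅n, x⁆ = 0}
          add_mem' := fun {a b} ha hb x hx => by
            rw [add_lie, map_add, ha x hx, hb x hx, add_zero]
          zero_mem' := fun x hx => by rw [zero_lie, map_zero]
          smul_mem' := fun c a ha x hx => by
            rw [smul_lie, map_smul, ha x hx, smul_zero] } :=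
      iSup_le fun i => iSup_le fun hi n hn => hG2 i hi n hn
    exact fun n hn => hle hn
  -- ⁅n, x⁆ ∈ N2 for n, x ∈ N
  have hbr : ∀ n ∈ N, ∀ x ∈ N, ⁅n, x⁆ ∈ N2 := by
    have hle : N ≤
        { carrier := {n : L | ∀ x ∈ N, ⁅n, x⁆ ∈ N2}
          add_mem' := fun {a b} ha hb x hx => by
            rw [add_lie]; exact N2.add_mem (ha x hx) (hb x hx)
          zero_mem' := fun x hx => by rw [zero_lie]; exact N2.zero_mem
          smul_mem' := fun c a ha x hx => by
            rw [smul_lie]; exact N2.smul_mem c (ha x hx) } := by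
      refine iSup_le fun i => iSup_le fun hi n hn x hx => ?_
      have hker : N ≤ Submodule.comap ((LieAlgebra.ad K L n : L →ₗ[K] L)) N2 := by
        refine iSup_le fun j => iSup_le fun hj z hz => ?_
        simp only [Submodule.mem_comap, LieAlgebra.ad_apply]
        have hle2 : 𝒢 (i + j) ≤ N2 :=
          le_iSup_of_le (i + j) (le_iSup_of_le (by omega : (2:ℤ) ≤ i + j) le_rfl)
        exact hle2 (hG i j n hn z hz)
      have := hker hx
      simpa only [Submodule.mem_comap, LieAlgebra.ad_apply] using this
    exact fun n hn => hle hn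
  -- N' ≤ N
  have hsub : (𝒢 1 ⊓ lieCentralizer K Y) ⊔ N2 ≤ N := by
    refine sup_le (le_trans inf_le_left ?_) ?_
    · exact le_iSup_of_le 1 (le_iSup_of_le le_rfl le_rfl)
    · exact iSup_le fun i => iSup_le fun hi =>
        le_iSup_of_le i (le_iSup_of_le (by omega) le_rfl)
  -- first claim
  have claim1 : ∀ n ∈ N, ∀ x ∈ (𝒢 1 ⊓ lieCentralizer K Y) ⊔ N2, B Y ⁅n, x⁆ = 0 := by
    intro n hn x hx
    rcases Submodule.mem_sup.mp hx with ⟨a, ha, b, hb, rfl⟩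
    rw [lie_add, map_add, hcent n a ha.2, h1 n hn b hb, add_zero]
  refine ⟨claim1, fun x hx y hy => claim1 x (hsub hx) y hy, fun n hn x hx _ => ?_⟩
  have hle3 : N2 ≤ (𝒢 1 ⊓ lieCentralizer K Y) ⊔ N2 := le_sup_right
  exact ⟨hle3 (hbr n hn x (hsub hx)), claim1 n hn x hx⟩
end

section
/- Let G̃ and G be measurable groups, μ̃ a measure on G̃ and μ a measure on G. Let p : G̃ → G be a group homomorphism, H a measurable subgroup of G, and s : H → G̃ a group homomorphism with p(s(h)) = h for all h ∈ H, such that x ↦ s(x) is a measurable embedding of H into G̃ whose image s(H) is measurable, and which is measure-preserving in the sense that μ̃(s(A)) = μ(A) for every measurable A ⊆ H. For a measurable function φ : G → ℂ with support contained in H, define its lift φ̃ : G̃ → ℂ by φ̃(x) = φ(p(x)) if x ∈ s(H) and φ̃(x) = 0 otherwise. Then for all measurable φ, φ' : G → ℂ with support contained in H, the convolution of the lifts equals the lift of the convolution: for every x̃ ∈ G̃, ∫_{G̃} φ̃(x̃ y⁻¹) φ̃'(y) dμ̃(y) = ψ̃(x̃), where ψ : G → ℂ is given by ψ(x) = ∫_{G}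 φ(x y⁻¹) φ'(y) dμ(y) (note that ψ is again supported in H, so its lift ψ̃ is defined). -/
open MeasureTheory Classical

/-- The lift to `G̃` of a function `φ : G → ℂ` along a homomorphism `p : G̃ → G`,
relative to a subset `S ⊆ G̃` (the image of a splitting): it equals `φ ∘ p` on `S`
and `0` elsewhere. -/
noncomputable def liftFun {G' G : Type*} (p : G' → G) (S : Set G') (φ : G → ℂ) :
    G' → ℂ :=
  fun x => if x ∈ S then φ (p x) else 0

/-- Let `p : G̃ → G` be a homomorphism of measurable groups, `H` a
measurable subgroup of `G`, and `s : H → G̃` a homomorphic section of `p` over `H` which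
is a measurable embedding with measurable image and which is measure-preserving
(`μ̃(s(A)) = μ(A)` for all measurable `A ⊆ H`).  For measurable `φ, φ' : G → ℂ` supported
in `H`, the convolution of the lifts `φ̃ ∗ φ̃'` (on `G̃`) equals the lift of the
convolution `φ ∗ φ'` (on `G`). -/
theorem convolution_of_lifts_eq_lift_of_convolution
    {G' G : Type*} [Group G'] [Group G] [MeasurableSpace G'] [MeasurableSpace G]
    [MeasurableMul₂ G'] [MeasurableInv G'] [MeasurableMul₂ G] [MeasurableInv G]
    (μ' : Measure G') (μ : Measure G)
    (p : G' →* G) (H : Subgroup G) (hH : MeasurableSet (H : Set G))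
    (s : H →* G') (hsec : ∀ h : H, p (s h) = (h : G))
    (hemb : MeasurableEmbedding (fun h : H => s h))
    (hrange : MeasurableSet (Set.range fun h : H => s h))
    (hpres : ∀ A : Set H, MeasurableSet A →
      μ' ((fun h : H => s h) '' A) = μ ((Subtype.val : H → G) '' A))
    (φ φ' : G → ℂ) (hφ : Measurable φ) (hφ' : Measurable φ')
    (hsupp : Function.support φ ⊆ (H : Set G))
    (hsupp' : Function.support φ' ⊆ (H : Set G))
    (x : G') :
    ∫ y, liftFun (⇑p) (Set.range fun h : H => s h) φ (x * y⁻¹) *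
          liftFun (⇑p) (Set.range fun h : H => s h) φ' y ∂μ'
      = liftFun (⇑p) (Set.range fun h : H => s h)
          (fun z => ∫ y, φ (z * y⁻¹) * φ' y ∂μ) x := by
  classical
  set S : Set G' := Set.range (fun h : H => s h) with hSdef
  have hval : MeasurableEmbedding (Subtype.val : H → G) :=
    MeasurableEmbedding.subtype_coe hH
  have hcomap : μ'.comap (fun h : H => s h) = μ.comap (Subtype.val : H → G) := by
    ext A hA
    rw [hemb.comap_apply, hval.comap_apply, hpres A hA]
  set ν : Measure H := μ.comap (Subtype.val : H → G) with hν
  have key : ∀ f : G' → ℂ, (∀ y ∉ S, f y = 0) →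
      ∫ y, f y ∂μ' = ∫ h, f (s h) ∂ν := by
    intro f hf
    calc ∫ y, f y ∂μ' = ∫ y in S, f y ∂μ' :=
          (setIntegral_eq_integral_of_forall_compl_eq_zero hf).symm
      _ = ∫ y, f y ∂(Measure.map (fun h : H => s h)
            (μ'.comap (fun h : H => s h))) := by rw [hemb.map_comap]
      _ = ∫ h, f (s h) ∂(μ'.comap (fun h : H => s h)) := hemb.integral_map f
      _ = ∫ h, f (s h) ∂ν := by rw [hcomap]
  have keyG : ∀ g : G → ℂ, (∀ y ∉ (H : Set G), g y = 0) →
      ∫ y, g y ∂μ = ∫ h, g (h : G) ∂ν := by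
    intro g hg
    have hrg : Set.range (Subtype.val : H → G) = (H : Set G) := Subtype.range_coe
    calc ∫ y, g y ∂μ = ∫ y in (H : Set G), g y ∂μ :=
          (setIntegral_eq_integral_of_forall_compl_eq_zero hg).symm
      _ = ∫ y, g y ∂(Measure.map (Subtype.val : H → G) ν) := by
          rw [hν, hval.map_comap, hrg]
      _ = ∫ h, g (h : G) ∂ν := hval.integral_map g
  by_cases hx : x ∈ S
  · obtain ⟨h₀, rfl⟩ := hx
    have hls : ∀ h : H, liftFun (⇑p) S φ (s h₀ * (s h)⁻¹) = φ ((h₀ : G) * (h : G)⁻¹) := by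
      intro h
      have hmem : s h₀ * (s h)⁻¹ = s (h₀ * h⁻¹) := by
        rw [map_mul, map_inv]
      rw [hmem]
      have : s (h₀ * h⁻¹) ∈ S := ⟨h₀ * h⁻¹, rfl⟩
      simp only [liftFun, if_pos this, hsec]
      push_cast
      ring_nf
    have hls' : ∀ h : H, liftFun (⇑p) S φ' (s h) = φ' (h : G) := by
      intro h
      have : s h ∈ S := ⟨h, rfl⟩
      simp only [liftFun, if_pos this, hsec]
    have hL : (∫ y, liftFun (⇑p) S φ (s h₀ * y⁻¹) * liftFun (⇑p) S φ' y ∂μ')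
        = ∫ h, φ ((h₀ : G) * (h : G)⁻¹) * φ' (h : G) ∂ν := by
      rw [key (fun y => liftFun (⇑p) S φ (s h₀ * y⁻¹) * liftFun (⇑p) S φ' y)
        (fun y hy => by simp [liftFun, if_neg hy])]
      exact integral_congr_ae (Filter.Eventually.of_forall fun h => by
        dsimp only; rw [hls h, hls' h])
    have hR : liftFun (⇑p) S (fun z => ∫ y, φ (z * y⁻¹) * φ' y ∂μ) (s h₀)
        = ∫ h, φ ((h₀ : G) * (h : G)⁻¹) * φ' (h : G) ∂ν := by
      have hmem : s h₀ ∈ S := ⟨h₀, rfl⟩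
      simp only [liftFun, if_pos hmem, hsec]
      exact keyG (fun y => φ ((h₀ : G) * y⁻¹) * φ' y)
        (fun y hy => by
          have : φ' y = 0 := by
            by_contra hc
            exact hy (hsupp' hc)
          simp [this])
    rw [hL, hR]
  · have hR : liftFun (⇑p) S (fun z => ∫ y, φ (z * y⁻¹) * φ' y ∂μ) x = 0 := by
      simp [liftFun, if_neg hx]
    rw [hR]
    have hzero : ∀ y, liftFun (⇑p) S φ (x * y⁻¹) * liftFun (⇑p) S φ' y = 0 := by
      intro y
      by_cases hy : y ∈ S
      · by_cases hxy : x * y⁻¹ ∈ S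
        · exfalso
          obtain ⟨a, ha⟩ := hxy
          obtain ⟨b, hb⟩ := hy
          refine hx ⟨a * b, ?_⟩
          show s (a * b) = x
          rw [map_mul, show s a = x * y⁻¹ from ha, show s b = y from hb]
          group
        · simp [liftFun, if_neg hxy]
      · simp [liftFun, if_neg hy]
    rw [integral_congr_ae (Filter.Eventually.of_forall hzero), integral_zero]
end
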